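/- Let ρ, σ > 0 and 0 ≤ ν < κ ≤ 1. Set r = min{ν/κ, 1 − ν/κ}, R = max{ν/κ, 1 − ν/κ} and r' = min{2r, 1 − 2r}. Then H_0(ρ,σ) − (ν/κ)·(H_0(ρ,σ) − H_κ(ρ,σ)) ≤ K((ρ/σ)^{κ/2}, 2)^{−r'} · H_ν(ρ,σ) + R·(H_κ(ρ,σ) + H_0(ρ,σ) − 2·H_{κ/2}(ρ,σ)). -/

import Mathlib

/-- The Kantorovich constant `K(t,2) = (t+1)^2/(4t)`. -/
noncomputable def kantorovich (t : ℝ) : ℝ := (t + 1) ^ 2 / (4 * t)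

lemma amgm {x α : ℝ} (hx : 0 ≤ x) (h0 : 0 ≤ α) (h1 : α ≤ 1) :
    x ^ α ≤ α * x + (1 - α) := by
  have := Real.geom_mean_le_arith_mean2_weighted (w₂ := 1 - α) (p₂ := 1) h0
    (by linarith) hx zero_le_one (by ring)
  simpa using this

lemma kant_pos {h : ℝ} (hh : 0 < h) : 0 < kantorovich h := by
  unfold kantorovich; positivity

lemma kant_inv {h : ℝ} (hh : 0 < h) : kantorovich h⁻¹ = kantorovich h := by
  unfold kantorovich
  field_simp
  ring

lemma key {h t : ℝ} (hh : 0 < h) (ht0 : 0 ≤ t) (ht : t ≤ 1/2) :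
    2*(1-t)*h - (1-2*t)*h^2 ≤ kantorovich h ^ (-(min (2*t) (1-2*t))) * h^(2*t) := by
  have hD : 0 < (1-2*t)*h + 2*t := by
    rcases lt_or_eq_of_le ht with h'|h'
    · nlinarith
    · rw [h']; norm_num
  set D : ℝ := (1-2*t)*h + 2*t with hDdef
  have step1 : 2*(1-t)*h - (1-2*t)*h^2 ≤ h / D := by
    rw [le_div_iff₀ hD]
    nlinarith [mul_nonneg hh.le (sq_nonneg ((1-2*t)*(h-1)))]
  have hK : 0 < kantorovich h := kant_pos hh
  have hh1 : (0:ℝ) < h + 1 := by linarith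
  refine le_trans step1 ?_
  rcases le_total (2*t) (1-2*t) with hc|hc
  · -- case t ≤ 1/4 : min = 2t
    rw [min_eq_left hc]
    set m : ℝ := 2*h/(h+1) with hm
    have hm0 : 0 < m := by positivity
    have hid : kantorovich h ^ (-(2*t)) * h^(2*t) = m^(4*t) := by
      have h1 : m^(4*t) = (m^2)^(2*t) := by
        rw [← Real.rpow_natCast m 2, ← Real.rpow_mul hm0.le]
        congr 1; ring
      have h2 : (m^2 : ℝ) = h / kantorovich h := by
        rw [hm]; unfold kantorovich
        rw [div_pow, div_div_eq_mul_div, div_eq_div_iff (by positivity) (by positivity)]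
        ring
      rw [h1, h2, Real.div_rpow hh.le hK.le, Real.rpow_neg hK.le]
      ring
    rw [hid]
    have hα : (0:ℝ) ≤ 1 - 4*t := by linarith
    have hb : m^(1-4*t) ≤ (1-4*t)*m + 4*t := by
      have := amgm hm0.le hα (by linarith)
      linarith
    have hmp : 0 < m^(1-4*t) := Real.rpow_pos_of_pos hm0 _
    have hsum : m^(4*t) * m^(1-4*t) = m := by
      rw [← Real.rpow_add hm0]; norm_num
    have hden : 0 < (1-4*t)*m + 4*t := lt_of_lt_of_le hmp hb
    have h3 : m / ((1-4*t)*m + 4*t) ≤ m^(4*t) := by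
      rw [div_le_iff₀ hden]
      calc m = m^(4*t) * m^(1-4*t) := hsum.symm
        _ ≤ m^(4*t) * ((1-4*t)*m + 4*t) :=
          mul_le_mul_of_nonneg_left hb (Real.rpow_pos_of_pos hm0 _).le
    refine le_trans (le_of_eq ?_) h3
    rw [div_eq_div_iff hD.ne' hden.ne', hm]
    field_simp
    ring
  · -- case t ≥ 1/4 : min = 1-2t
    rw [min_eq_right hc]
    set w : ℝ := (h+1)/2 with hw
    have hw0 : 0 < w := by positivity
    have h2 : (w^2 : ℝ) = h * kantorovich h := by
      rw [hw]; unfold kantorovich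
      field_simp; ring
    have e1 : w^(2-4*t) = h^(1-2*t) * kantorovich h^(1-2*t) := by
      have e0 : w^(2-4*t) = (w^2)^(1-2*t) := by
        rw [← Real.rpow_natCast w 2, ← Real.rpow_mul hw0.le]
        congr 1; ring
      rw [e0, h2, Real.mul_rpow hh.le hK.le]
    have e2 : h^(2*t) * h^(1-2*t) = h := by
      rw [← Real.rpow_add hh]; norm_num
    have hid : kantorovich h ^ (-(1-2*t)) * h^(2*t) = h / w^(2-4*t) := by
      rw [Real.rpow_neg hK.le, e1, eq_div_iff (by positivity)]
      have hKne : kantorovich h ^ (1-2*t) ≠ 0 := (Real.rpow_pos_of_pos hK _).ne'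
      field_simp
      linear_combination e2
    rw [hid]
    have hα0 : (0:ℝ) ≤ 2-4*t := by linarith
    have hb : w^(2-4*t) ≤ D := by
      have := amgm hw0.le hα0 (by linarith)
      calc w^(2-4*t) ≤ (2-4*t)*w + (1-(2-4*t)) := this
        _ = D := by rw [hw, hDdef]; ring
    have hwp : 0 < w^(2-4*t) := Real.rpow_pos_of_pos hw0 _
    exact div_le_div_of_nonneg_left hh.le hwp hb

lemma two_var {x y t : ℝ} (hx : 0 < x) (hy : 0 < y) (ht0 : 0 ≤ t) (ht : t ≤ 1/2) :
    (1-t)*x + t*y ≤ kantorovich ((y/x)^((1:ℝ)/2)) ^ (-(min (2*t) (1-2*t))) * (x^(1-t)*y^t)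
      + (1-t)*(x + y - 2*(x*y)^((1:ℝ)/2)) := by
  set h : ℝ := (y/x)^((1:ℝ)/2) with hhdef
  have hh : 0 < h := Real.rpow_pos_of_pos (by positivity) _
  have hsq : h^2 = y/x := by
    rw [hhdef, ← Real.rpow_natCast ((y/x)^((1:ℝ)/2)) 2, ← Real.rpow_mul (by positivity)]
    norm_num
  have hy' : y = x * h^2 := by rw [hsq]; field_simp
  have hxy : (x*y)^((1:ℝ)/2) = x * h := by
    have : x*y = (x*h)^2 := by rw [hy']; ring
    rw [this, ← Real.rpow_natCast (x*h) 2, ← Real.rpow_mul (by positivity)]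
    norm_num
  have hpow : x^(1-t)*y^t = x * h^(2*t) := by
    have e1 : y^t = x^t * h^(2*t) := by
      rw [hy', Real.mul_rpow hx.le (by positivity), ← Real.rpow_natCast h 2,
        ← Real.rpow_mul hh.le]
      ring_nf
    rw [e1, ← mul_assoc, ← Real.rpow_add hx]
    norm_num
  have hkey := key hh ht0 ht
  have hmul := mul_le_mul_of_nonneg_left hkey hx.le
  rw [hpow, hxy, hy']
  nlinarith [hmul]

lemma pow_comb {a b : ℝ} (ha : 0 < a) (hb : 0 < b) (κ t : ℝ) :
    (a^κ * b^(1-κ))^t * b^(1-t) = a^(κ*t) * b^(1-κ*t) := by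
  rw [Real.mul_rpow (by positivity) (by positivity), ← Real.rpow_mul ha.le,
    ← Real.rpow_mul hb.le, mul_assoc, ← Real.rpow_add hb,
    show (1-κ)*t + (1-t) = 1 - κ*t from by ring]

lemma div_half {a b : ℝ} (ha : 0 < a) (hb : 0 < b) (κ : ℝ) :
    ((a^κ * b^(1-κ)) / b)^((1:ℝ)/2) = (a/b)^(κ/2) := by
  have h1 : (a^κ * b^(1-κ)) / b = (a/b)^κ := by
    rw [Real.div_rpow ha.le hb.le,
      div_eq_div_iff hb.ne' (Real.rpow_pos_of_pos hb κ).ne']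
    have hbb : b^(1-κ) * b^κ = b := by rw [← Real.rpow_add hb]; norm_num
    linear_combination (a^κ) * hbb
  rw [h1, ← Real.rpow_mul (by positivity), show κ*((1:ℝ)/2) = κ/2 from by ring]

/-- The Heinz mean `H_μ(ρ,σ) = (ρ^μ σ^(1-μ) + ρ^(1-μ) σ^μ)/2`. -/
noncomputable def heinz (μ ρ σ : ℝ) : ℝ := (ρ ^ μ * σ ^ (1 - μ) + ρ ^ (1 - μ) * σ ^ μ) / 2

theorem stmt_3 (ρ σ ν κ : ℝ) (hρ : 0 < ρ) (hσ : 0 < σ)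
    (hν : 0 ≤ ν) (hνκ : ν < κ) (hκ : κ ≤ 1)
    (r R r' : ℝ) (hr : r = min (ν / κ) (1 - ν / κ)) (hR : R = max (ν / κ) (1 - ν / κ))
    (hr' : r' = min (2 * r) (1 - 2 * r)) :
    heinz 0 ρ σ - (ν / κ) * (heinz 0 ρ σ - heinz κ ρ σ)
      ≤ kantorovich ((ρ / σ) ^ (κ / 2)) ^ (-r') * heinz ν ρ σ
        + R * (heinz κ ρ σ + heinz 0 ρ σ - 2 * heinz (κ / 2) ρ σ) := by
  have hκ0 : 0 < κ := lt_of_le_of_lt hν hνκ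
  set t : ℝ := ν / κ with htdef
  have ht0 : 0 ≤ t := div_nonneg hν hκ0.le
  have ht1 : t < 1 := (div_lt_one hκ0).2 hνκ
  have hκt : κ * t = ν := by rw [htdef]; field_simp
  set A : ℝ := ρ^κ * σ^(1-κ) with hAdef
  set B : ℝ := σ^κ * ρ^(1-κ) with hBdef
  have hA : 0 < A := by rw [hAdef]; positivity
  have hB : 0 < B := by rw [hBdef]; positivity
  have e0 : heinz 0 ρ σ = (σ + ρ)/2 := by simp [heinz]
  have eκ : heinz κ ρ σ = (A + B)/2 := by rw [heinz, hAdef, hBdef]; ring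
  have c1 : A^t * σ^(1-t) = ρ^ν * σ^(1-ν) := by rw [hAdef, pow_comb hρ hσ, hκt]
  have c2 : B^t * ρ^(1-t) = σ^ν * ρ^(1-ν) := by rw [hBdef, pow_comb hσ hρ, hκt]
  have eν : heinz ν ρ σ = (A^t * σ^(1-t) + B^t * ρ^(1-t))/2 := by
    rw [heinz, c1, c2]; ring
  have hκ2 : κ * ((1:ℝ)/2) = κ/2 := by ring
  have d1 : (σ * A)^((1:ℝ)/2) = ρ^(κ/2) * σ^(1-κ/2) := by
    have h := pow_comb hρ hσ κ (1/2)
    rw [hκ2] at h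
    calc (σ*A)^((1:ℝ)/2) = (ρ^κ*σ^(1-κ))^((1:ℝ)/2) * σ^(1-(1:ℝ)/2) := by
          rw [mul_comm, Real.mul_rpow hA.le hσ.le, hAdef]; norm_num
      _ = ρ^(κ/2) * σ^(1-κ/2) := h
  have d2 : (ρ * B)^((1:ℝ)/2) = σ^(κ/2) * ρ^(1-κ/2) := by
    have h := pow_comb hσ hρ κ (1/2)
    rw [hκ2] at h
    calc (ρ*B)^((1:ℝ)/2) = (σ^κ*ρ^(1-κ))^((1:ℝ)/2) * ρ^(1-(1:ℝ)/2) := by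
          rw [mul_comm, Real.mul_rpow hB.le hρ.le, hBdef]; norm_num
      _ = σ^(κ/2) * ρ^(1-κ/2) := h
  have eh : heinz (κ/2) ρ σ = ((σ*A)^((1:ℝ)/2) + (ρ*B)^((1:ℝ)/2))/2 := by
    rw [heinz, d1, d2]; ring
  have ek1 : (A/σ)^((1:ℝ)/2) = (ρ/σ)^(κ/2) := by rw [hAdef]; exact div_half hρ hσ κ
  have ek2 : (B/ρ)^((1:ℝ)/2) = (σ/ρ)^(κ/2) := by rw [hBdef]; exact div_half hσ hρ κ
  have einv : (σ/ρ)^(κ/2) = ((ρ/σ)^(κ/2))⁻¹ := by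
    rw [← Real.inv_rpow (by positivity), inv_div]
  have ekk2 : kantorovich ((B/ρ)^((1:ℝ)/2)) = kantorovich ((ρ/σ)^(κ/2)) := by
    rw [ek2, einv, kant_inv (Real.rpow_pos_of_pos (by positivity) _)]
  rcases le_or_gt t (1/2) with hc|hc
  · have hrr : r = t := by rw [hr, min_eq_left (by linarith)]
    have hRR : R = 1 - t := by rw [hR, max_eq_right (by linarith)]
    have hrr' : r' = min (2*t) (1-2*t) := by rw [hr', hrr]
    have h1 := two_var hσ hA ht0 hc
    have h2 := two_var hρ hB ht0 hc
    rw [ek1] at h1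
    rw [ekk2] at h2
    rw [e0, eκ, eν, eh, hrr', hRR]
    set KK := kantorovich ((ρ/σ)^(κ/2)) ^ (-(min (2*t) (1-2*t))) with hKK
    have expand : KK * ((A^t*σ^(1-t) + B^t*ρ^(1-t))/2)
        = (KK*(σ^(1-t)*A^t) + KK*(ρ^(1-t)*B^t))/2 := by ring
    rw [expand]
    linarith [h1, h2]
  · have ht1' : (0:ℝ) ≤ 1 - t := by linarith
    have hc' : 1 - t ≤ 1/2 := by linarith
    have hrr : r = 1 - t := by rw [hr, min_eq_right (by linarith)]
    have hRR : R = t := by rw [hR, max_eq_left (by linarith)]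
    have hrr' : r' = min (2*(1-t)) (1-2*(1-t)) := by rw [hr', hrr]
    have h1 := two_var hA hσ ht1' hc'
    have h2 := two_var hB hρ ht1' hc'
    rw [show (1:ℝ) - (1-t) = t from by ring] at h1 h2
    have ekA2 : kantorovich ((σ/A)^((1:ℝ)/2)) = kantorovich ((ρ/σ)^(κ/2)) := by
      have e : (σ/A)^((1:ℝ)/2) = ((A/σ)^((1:ℝ)/2))⁻¹ := by
        rw [← Real.inv_rpow (by positivity), inv_div]
      rw [e, kant_inv (Real.rpow_pos_of_pos (by positivity) _), ek1]
    have ekB2 : kantorovich ((ρ/B)^((1:ℝ)/2)) = kantorovich ((ρ/σ)^(κ/2)) := by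
      have e : (ρ/B)^((1:ℝ)/2) = ((B/ρ)^((1:ℝ)/2))⁻¹ := by
        rw [← Real.inv_rpow (by positivity), inv_div]
      rw [e, kant_inv (Real.rpow_pos_of_pos (by positivity) _), ekk2]
    rw [ekA2, mul_comm A σ] at h1
    rw [ekB2, mul_comm B ρ] at h2
    rw [e0, eκ, eν, eh, hrr', hRR]
    set KK := kantorovich ((ρ/σ)^(κ/2)) ^ (-(min (2*(1-t)) (1-2*(1-t)))) with hKK
    have expand : KK * ((A^t*σ^(1-t) + B^t*ρ^(1-t))/2)
        = (KK*(A^t*σ^(1-t)) + KK*(B^t*ρ^(1-t)))/2 := by ring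
    rw [expand]
    linarith [h1, h2]
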